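/- For every k ∈ ℤ and every complex symmetric N×N matrix L, the function β^k·α_L is a scalar cocycle for the action of G̃^J_N on ℍ_{1,N}: for all g, g' ∈ G̃^J_N and all (τ,z) ∈ ℍ_{1,N}, β(MM'', τ)^k·α_L(g·g', (τ,z)) = β(M, g'·τ-component)^k·α_L(g, g'·(τ,z)) · β(M', τ)^k·α_L(g', (τ,z)), where M, M' are the SL₂(ℝ)-components of g, g' and MM'' that of g·g'. Equivalently, the slash action satisfies (f|_{k,L}[g])|_{k,L}[g'] = f|_{k,L}[g·g'] for all functions f on ℍ_{1,N}. -/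

import Mathlib

set_option maxRecDepth 8000
set_option maxHeartbeats 2000000


open Matrix Complex

noncomputable section

def J2 : Matrix (Fin 2) (Fin 2) ℝ := !![0, -1; 1, 0]

/-- An element of the (centrally extended) Jacobi group data: a triple (M, X, κ). -/
structure JTriple (N : ℕ) where
  M : Matrix (Fin 2) (Fin 2) ℝ
  X : Matrix (Fin N) (Fin 2) ℝ
  κ : Matrix (Fin N) (Fin N) ℝ

/-- Membership in the centrally extended real Jacobi group `G̃^J_N`. -/
def JTriple.IsMem {N : ℕ} (g : JTriple N) : Prop :=
  g.M.det = 1 ∧ (g.κ + (2⁻¹ : ℝ) • (g.X * J2 * g.X.transpose)).IsSymm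

/-- The group law of `G̃^J_N`. -/
def JTriple.mul {N : ℕ} (g g' : JTriple N) : JTriple N :=
  ⟨g.M * g'.M, g.X * g'.M + g'.X, g.κ + g'.κ - g.X * g'.M * J2 * g'.X.transpose⟩

/-- The Möbius action `Mτ := (aτ+b)/(cτ+d)`. -/
def mAct (M : Matrix (Fin 2) (Fin 2) ℝ) (τ : ℂ) : ℂ :=
  ((M 0 0 : ℝ) * τ + (M 0 1 : ℝ)) / ((M 1 0 : ℝ) * τ + (M 1 1 : ℝ))

/-- The cocycle `β(M,τ) := (cτ+d)⁻¹`. -/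
def betaC (M : Matrix (Fin 2) (Fin 2) ℝ) (τ : ℂ) : ℂ :=
  (((M 1 0 : ℝ) : ℂ) * τ + ((M 1 1 : ℝ) : ℂ))⁻¹

/-- First column of `X`, as a complex vector. -/
def col1 {N : ℕ} (X : Matrix (Fin N) (Fin 2) ℝ) : Fin N → ℂ := fun i => (X i 0 : ℂ)

/-- Second column of `X`, as a complex vector. -/
def col2 {N : ℕ} (X : Matrix (Fin N) (Fin 2) ℝ) : Fin N → ℂ := fun i => (X i 1 : ℂ)

/-- The action of `G̃^J_N` on `ℍ_{1,N} ⊆ ℂ × ℂ^N`: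
`(M,X,κ)·(τ,z) := (Mτ, β(M,τ)(z + X₁τ + X₂))`. -/
def jAct {N : ℕ} (g : JTriple N) (p : ℂ × (Fin N → ℂ)) : ℂ × (Fin N → ℂ) :=
  (mAct g.M p.1, betaC g.M p.1 • (p.2 + p.1 • col1 g.X + col2 g.X))

/-- The matrix-valued function `a(g, (τ,z))`. -/
def aFun {N : ℕ} (g : JTriple N) (p : ℂ × (Fin N → ℂ)) : Matrix (Fin N) (Fin N) ℂ :=
  g.κ.map (fun t => (t : ℂ))
    + vecMulVec (col2 g.X) (col1 g.X) + vecMulVec (col1 g.X) p.2 + vecMulVec p.2 (col1 g.X)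
    + p.1 • vecMulVec (col1 g.X) (col1 g.X)
    - (((g.M 1 0 : ℝ) : ℂ) * betaC g.M p.1) •
        vecMulVec (p.2 + p.1 • col1 g.X + col2 g.X) (p.2 + p.1 • col1 g.X + col2 g.X)

/-- The scalar cocycle `α_L(g,(τ,z)) := e^{2πi·tr(L·a(g,(τ,z)))}`. -/
def alphaL {N : ℕ} (L : Matrix (Fin N) (Fin N) ℂ) (g : JTriple N)
    (p : ℂ × (Fin N → ℂ)) : ℂ :=
  Complex.exp (2 * Real.pi * Complex.I * (L * aFun g p).trace)

/-- The slash action `(f|_{k,L}[g])(τ,z) := β(M,τ)^k·α_L(g,(τ,z))·f(g·(τ,z))`. -/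
def jSlash {N : ℕ} (k : ℤ) (L : Matrix (Fin N) (Fin N) ℂ)
    (f : ℂ × (Fin N → ℂ) → ℂ) (g : JTriple N) : ℂ × (Fin N → ℂ) → ℂ :=
  fun p => betaC g.M p.1 ^ k * alphaL L g p * f (jAct g p)


section Helpers

private theorem scalar_core (a b c d a' b' c' d' τ zi zj xi1 xi2 xj1 xj2 yi1 yi2 yj1 yj2 ki kj : ℂ)
    (hdet' : a' * d' - b' * c' = 1)
    (he' : c' * τ + d' ≠ 0)
    (he'' : (c * a' + d * c') * τ + (c * b' + d * d') ≠ 0) :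
    (ki + kj - ((b' * xi1 + d' * xi2) * yj1 - (a' * xi1 + c' * xi2) * yj2))
      + (b' * xi1 + d' * xi2 + yi2) * (a' * xj1 + c' * xj2 + yj1)
      + (a' * xi1 + c' * xi2 + yi1) * zj + zi * (a' * xj1 + c' * xj2 + yj1)
      + τ * ((a' * xi1 + c' * xi2 + yi1) * (a' * xj1 + c' * xj2 + yj1))
      - (c * a' + d * c') * (((c * a' + d * c') * τ + (c * b' + d * d'))⁻¹) *
          ((zi + τ * (a' * xi1 + c' * xi2 + yi1) + (b' * xi1 + d' * xi2 + yi2)) *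
           (zj + τ * (a' * xj1 + c' * xj2 + yj1) + (b' * xj1 + d' * xj2 + yj2)))
    =
    (ki + xi2 * xj1
      + xi1 * ((c' * τ + d')⁻¹ * (zj + τ * yj1 + yj2))
      + ((c' * τ + d')⁻¹ * (zi + τ * yi1 + yi2)) * xj1
      + ((a' * τ + b') / (c' * τ + d')) * (xi1 * xj1)
      - c * ((c * ((a' * τ + b') / (c' * τ + d')) + d)⁻¹) *
          (((c' * τ + d')⁻¹ * (zi + τ * yi1 + yi2) + ((a' * τ + b') / (c' * τ + d')) * xi1 + xi2) *
           ((c' * τ + d')⁻¹ * (zj + τ * yj1 + yj2) + ((a' * τ + b') / (c' * τ + d')) * xj1 + xj2)))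
    + (kj + yi2 * yj1 + yi1 * zj + zi * yj1 + τ * (yi1 * yj1)
      - c' * ((c' * τ + d')⁻¹) *
          ((zi + τ * yi1 + yi2) * (zj + τ * yj1 + yj2))) := by
  have hB : c * ((c * ((a' * τ + b') / (c' * τ + d')) + d)⁻¹) *
          (((c' * τ + d')⁻¹ * (zi + τ * yi1 + yi2) + ((a' * τ + b') / (c' * τ + d')) * xi1 + xi2) *
           ((c' * τ + d')⁻¹ * (zj + τ * yj1 + yj2) + ((a' * τ + b') / (c' * τ + d')) * xj1 + xj2))
      = c * (((zi + τ * yi1 + yi2) + (a' * τ + b') * xi1 + (c' * τ + d') * xi2) *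
             (((zj + τ * yj1 + yj2) + (a' * τ + b') * xj1 + (c' * τ + d') * xj2)))
          / ((c' * τ + d') * ((c * a' + d * c') * τ + (c * b' + d * d'))) := by
    have hcd : c * ((a' * τ + b') / (c' * τ + d')) + d
        = ((c * a' + d * c') * τ + (c * b' + d * d')) / (c' * τ + d') := by
      have : τ * c' + d' ≠ 0 := by rwa [mul_comm]
      field_simp; ring
    rw [hcd]
    field_simp
  rw [hB]
  set wi := zi + τ * yi1 + yi2 with hwi
  set wj := zj + τ * yj1 + yj2 with hwj
  set n' := a' * τ + b' with hn
  set E' := c' * τ + d' with hE1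
  set c2 := c * a' + d * c' with hc2
  set d2 := c * b' + d * d' with hd2
  set E2 := c2 * τ + d2 with hE2
  set Z1i := a' * xi1 + c' * xi2 + yi1 with hZ1i
  set Z1j := a' * xj1 + c' * xj2 + yj1 with hZ1j
  set Z2i := b' * xi1 + d' * xi2 + yi2 with hZ2i
  set Z2j := b' * xj1 + d' * xj2 + yj2 with hZ2j
  set Wi := zi + τ * Z1i + Z2i with hWi
  set Wj := zj + τ * Z1j + Z2j with hWj
  set Ei := wi + n' * xi1 + E' * xi2 with hEi
  set Ej := wj + n' * xj1 + E' * xj2 with hEj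
  have hred : (ki + kj - ((b' * xi1 + d' * xi2) * yj1 - (a' * xi1 + c' * xi2) * yj2)
        + Z2i * Z1j + Z1i * zj + zi * Z1j + τ * (Z1i * Z1j)) * E2 * E' - c2 * (Wi * Wj) * E'
      = ((ki + xi2 * xj1) * E' + xi1 * wj + wi * xj1 + n' * (xi1 * xj1)) * E2 - c * (Ei * Ej)
        + ((kj + yi2 * yj1 + yi1 * zj + zi * yj1 + τ * (yi1 * yj1)) * E' - c' * (wi * wj)) * E2 := by
    simp only [hwi, hwj, hn, hE1, hc2, hd2, hE2, hZ1i, hZ1j, hZ2i, hZ2j, hWi, hWj, hEi, hEj]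
    linear_combination (-c * yi2 * yj2 + -c * zj * yi2 + -c * zi * yj2 + -c * zi * zj + -c * τ * yi2 * yj1 + -c * τ * yi1 * yj2 + -c * τ * zj * yi1 + -c * τ * zi * yj1 + -c * τ^2 * yi1 * yj1 + d' * d * xj1 * yi2 + d' * d * xi1 * yj2 + d' * d * zj * xi1 + d' * d * zi * xj1 + d' * d * τ * xj1 * yi1 + d' * d * τ * xi1 * yj1 + -d' * c * xj2 * yi2 + -d' * c * xi2 * yj2 + -d' * c * zj * xi2 + -d' * c * zi * xj2 + -d' * c * τ * xj2 * yi1 + -d' * c * τ * xi2 * yj1 + d'^2 * d * xi2 * xj1 + -d'^2 * c * xi2 * xj2 + c' * d * τ * xj1 * yi2 + c' * d * τ * xi1 * yj2 + c' * d * τ * zj * xi1 + c' * d * τ * zi * xj1 + c' * d * τ^2 * xj1 * yi1 + c' * d * τ^2 * xi1 * yj1 + -c' * c * τ * xj2 * yi2 + -c' * c * τ * xi2 * yj2 + -c' * c * τ * zj * xi2 + -c' * c * τ * zi * xj2 + -c' * c * τ^2 * xj2 * yi1 + -c' * c * τ^2 * xi2 * yj1 + 2 * c' * d' * d * τ * xi2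 * xj1 + (-2) * c' * d' * c * τ * xi2 * xj2 + c'^2 * d * τ^2 * xi2 * xj1 + -c'^2 * c * τ^2 * xi2 * xj2 + b' * d' * d * xi1 * xj1 + -b' * d' * c * xi1 * xj2 + b' * c' * d * τ * xi1 * xj1 + -b' * c' * c * τ * xi1 * xj2 + a' * d' * d * τ * xi1 * xj1 + -a' * d' * c * τ * xi1 * xj2 + a' * c' * d * τ^2 * xi1 * xj1 + -a' * c' * c * τ^2 * xi1 * xj2) * hdet'
  field_simp
  linear_combination hred

/-- nonvanishing of `cτ+d` for `det M = 1` and `τ` in the upper half-plane -/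
private theorem denom_ne (M : Matrix (Fin 2) (Fin 2) ℝ) (hM : M.det = 1) {τ : ℂ}
    (hτ : 0 < τ.im) : ((M 1 0 : ℝ) : ℂ) * τ + ((M 1 1 : ℝ) : ℂ) ≠ 0 := by
  intro h
  have him : (M 1 0 : ℝ) * τ.im = 0 := by
    have := congrArg Complex.im h
    simpa using this
  have hc : M 1 0 = 0 := by
    rcases mul_eq_zero.mp him with h' | h'
    · exact h'
    · exact absurd h' (ne_of_gt hτ)
  have hd : M 1 1 = 0 := by
    have := congrArg Complex.re h
    simp [hc] at this
    exact this
  rw [Matrix.det_fin_two, hc, hd] at hM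
  simp at hM

end Helpers

/-- For every `k ∈ ℤ` and complex symmetric `L`, the function `β^k·α_L` is a scalar cocycle
for the action of `G̃^J_N` on `ℍ_{1,N}`; equivalently `(f|_{k,L}[g])|_{k,L}[g'] = f|_{k,L}[g·g']`. -/
theorem betaAlpha_cocycle (N : ℕ) (hN : 1 ≤ N) (k : ℤ) (L : Matrix (Fin N) (Fin N) ℂ)
    (hL : L.IsSymm) (g g' : JTriple N) (hg : g.IsMem) (hg' : g'.IsMem)
    (p : ℂ × (Fin N → ℂ)) (hp : 0 < p.1.im) :
    betaC (g.mul g').M p.1 ^ k * alphaL L (g.mul g') p =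
      (betaC g.M (jAct g' p).1 ^ k * alphaL L g (jAct g' p)) *
        (betaC g'.M p.1 ^ k * alphaL L g' p) ∧
    ∀ f : ℂ × (Fin N → ℂ) → ℂ, jSlash k L (jSlash k L f g) g' p = jSlash k L f (g.mul g') p := by
  obtain ⟨hdet, -⟩ := hg
  obtain ⟨hdet', -⟩ := hg'
  set τ := p.1 with hτdef
  have he' : ((g'.M 1 0 : ℝ) : ℂ) * τ + ((g'.M 1 1 : ℝ) : ℂ) ≠ 0 := denom_ne g'.M hdet' hp
  have hdet'' : (g.M * g'.M).det = 1 := by rw [Matrix.det_mul, hdet, hdet', one_mul]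
  have he''0 : (((g.M * g'.M) 1 0 : ℝ) : ℂ) * τ + (((g.M * g'.M) 1 1 : ℝ) : ℂ) ≠ 0 :=
    denom_ne _ hdet'' hp
  have he'' : ((g.M 1 0 : ℝ) * (g'.M 0 0 : ℝ) + (g.M 1 1 : ℝ) * (g'.M 1 0 : ℝ) : ℂ) * τ
      + ((g.M 1 0 : ℝ) * (g'.M 0 1 : ℝ) + (g.M 1 1 : ℝ) * (g'.M 1 1 : ℝ) : ℂ) ≠ 0 := by
    have h := he''0
    simp only [Matrix.mul_apply, Fin.sum_univ_two] at h
    push_cast at h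
    exact h
  have hdetC : ((g'.M 0 0 : ℝ) : ℂ) * ((g'.M 1 1 : ℝ) : ℂ)
      - ((g'.M 0 1 : ℝ) : ℂ) * ((g'.M 1 0 : ℝ) : ℂ) = 1 := by
    rw [Matrix.det_fin_two] at hdet'
    exact_mod_cast congrArg (fun t : ℝ => (t : ℂ)) hdet'
  have hy : ((g.M 1 0 : ℝ) : ℂ) * mAct g'.M τ + ((g.M 1 1 : ℝ) : ℂ) ≠ 0 := by
    have hcd : ((g.M 1 0 : ℝ) : ℂ) * mAct g'.M τ + ((g.M 1 1 : ℝ) : ℂ)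
        = ((((g.M 1 0 : ℝ) * (g'.M 0 0 : ℝ) + (g.M 1 1 : ℝ) * (g'.M 1 0 : ℝ) : ℂ)) * τ
            + (((g.M 1 0 : ℝ) * (g'.M 0 1 : ℝ) + (g.M 1 1 : ℝ) * (g'.M 1 1 : ℝ) : ℂ)))
          / (((g'.M 1 0 : ℝ) : ℂ) * τ + ((g'.M 1 1 : ℝ) : ℂ)) := by
      rw [mAct]
      have : τ * ((g'.M 1 0 : ℝ) : ℂ) + ((g'.M 1 1 : ℝ) : ℂ) ≠ 0 := by rwa [mul_comm]
      field_simp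
      ring
    rw [hcd]
    exact div_ne_zero he'' he'
  have hbeta : betaC (g.M * g'.M) τ = betaC g.M (mAct g'.M τ) * betaC g'.M τ := by
    simp only [betaC, Matrix.mul_apply, Fin.sum_univ_two]
    rw [← mul_inv]
    congr 1
    rw [mAct]
    push_cast
    field_simp
    ring
  have hyA : ((g.M 1 0 : ℝ) : ℂ) * ((((g'.M 0 0 : ℝ) : ℂ) * τ + ((g'.M 0 1 : ℝ) : ℂ)) /
        (((g'.M 1 0 : ℝ) : ℂ) * τ + ((g'.M 1 1 : ℝ) : ℂ))) + ((g.M 1 1 : ℝ) : ℂ) ≠ 0 := by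
    rw [mAct] at hy
    exact hy
  have h1 : mAct g.M (mAct g'.M τ) = mAct (g.M * g'.M) τ := by
    simp only [mAct, Matrix.mul_apply, Fin.sum_univ_two]
    push_cast
    rw [div_eq_div_iff hyA he'']
    have : τ * ((g'.M 1 0 : ℝ) : ℂ) + ((g'.M 1 1 : ℝ) : ℂ) ≠ 0 := by rwa [mul_comm]
    field_simp
    ring
  have hjact : jAct g (jAct g' p) = jAct (g.mul g') p := by
    refine Prod.ext ?_ ?_
    · exact h1
    · funext i
      show betaC g.M (mAct g'.M τ) * _ = betaC (g.M * g'.M) τ * _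
      rw [hbeta]
      simp only [jAct, betaC, mAct, JTriple.mul, col1, col2, Pi.add_apply, Pi.smul_apply,
        smul_eq_mul, Matrix.mul_apply, Matrix.add_apply, Fin.sum_univ_two]
      push_cast
      simp only [← hτdef]
      have : τ * ((g'.M 1 0 : ℝ) : ℂ) + ((g'.M 1 1 : ℝ) : ℂ) ≠ 0 := by rwa [mul_comm]
      field_simp
      ring
  have hafun : aFun (g.mul g') p = aFun g (jAct g' p) + aFun g' p := by
    ext i j
    simp only [aFun, jAct, mAct, betaC, JTriple.mul, col1, col2, J2, Matrix.add_apply,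
      Matrix.sub_apply, Matrix.smul_apply, Matrix.map_apply, Matrix.mul_apply,
      Matrix.vecMulVec_apply, Pi.add_apply, Pi.smul_apply, smul_eq_mul, Fin.sum_univ_two,
      Matrix.transpose_apply, Matrix.cons_val', Matrix.cons_val_zero, Matrix.cons_val_one,
      Matrix.head_cons, Matrix.head_fin_const, Matrix.empty_val', Matrix.cons_val_fin_one,
      Matrix.of_apply]
    push_cast
    linear_combination scalar_core ((g.M 0 0 : ℝ) : ℂ) ((g.M 0 1 : ℝ) : ℂ) ((g.M 1 0 : ℝ) : ℂ)
      ((g.M 1 1 : ℝ) : ℂ) ((g'.M 0 0 : ℝ) : ℂ) ((g'.M 0 1 : ℝ) : ℂ) ((g'.M 1 0 : ℝ) : ℂ)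
      ((g'.M 1 1 : ℝ) : ℂ) τ (p.2 i) (p.2 j) ((g.X i 0 : ℝ) : ℂ) ((g.X i 1 : ℝ) : ℂ)
      ((g.X j 0 : ℝ) : ℂ) ((g.X j 1 : ℝ) : ℂ) ((g'.X i 0 : ℝ) : ℂ) ((g'.X i 1 : ℝ) : ℂ)
      ((g'.X j 0 : ℝ) : ℂ) ((g'.X j 1 : ℝ) : ℂ) ((g.κ i j : ℝ) : ℂ) ((g'.κ i j : ℝ) : ℂ)
      hdetC he' he''
  have halpha : alphaL L (g.mul g') p = alphaL L g (jAct g' p) * alphaL L g' p := by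
    rw [alphaL, alphaL, alphaL, ← Complex.exp_add]
    congr 1
    rw [hafun, Matrix.mul_add, Matrix.trace_add]
    ring
  have hbk : betaC (g.mul g').M τ ^ k = betaC g.M (jAct g' p).1 ^ k * betaC g'.M τ ^ k := by
    rw [show (g.mul g').M = g.M * g'.M from rfl, show (jAct g' p).1 = mAct g'.M τ from rfl,
      hbeta, mul_zpow]
  refine ⟨?_, ?_⟩
  · rw [hbk, halpha]
    ring
  · intro f
    simp only [jSlash]
    rw [hjact, halpha, hbk]
    ring
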